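/- Under the exact DM-ADMM updates with ρ ≤ (ξ - σ)/(2(n-1)) for some σ > 0, where the f_i are proper, lower semi-continuous, convex, and ∑ f_i is strongly convex with parameter 2ξ, the iterates satisfy r^k → 0, x^k → x*, and p^k = ∑_i f_i(x_i^k) → p* = ∑_i f_i(x*_i) as k → ∞, where x* is the unique global minimizer of ∑_i f_i(x_i) subject to ∑_i x_i = C. -/

import Mathlib

open Filter


lemma conv_aff_real (α β : ℝ) : ConvexOn ℝ Set.univ (fun z : ℝ => α * z + β) := by
  refine ⟨convex_univ, ?_⟩
  intro p _ q _ a b _ _ hab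
  simp only [smul_eq_mul]
  exact le_of_eq (by linear_combination -β * hab)

lemma conv_sum_aff (n : ℕ) (c d : ℝ) :
    ConvexOn ℝ Set.univ (fun x : EuclideanSpace ℝ (Fin n) => c * (∑ i, x i) + d) := by
  refine ⟨convex_univ, ?_⟩
  intro p _ q _ a b _ _ hab
  simp only [PiLp.add_apply, PiLp.smul_apply, smul_eq_mul, Finset.sum_add_distrib,
    ← Finset.mul_sum]
  exact le_of_eq (by linear_combination -d * hab)

lemma strong_min {E : Type*} [NormedAddCommGroup E] [InnerProductSpace ℝ E]
    (F : E → ℝ) (c : ℝ) (hc : 0 ≤ c)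
    (hcv : ConvexOn ℝ Set.univ (fun z => F z - c * ‖z‖ ^ 2))
    (m : E) (hm : ∀ z, F m ≤ F z) (z : E) :
    F m + c * ‖z - m‖ ^ 2 ≤ F z := by
  have key : ∀ t : ℝ, 0 < t → t ≤ 1 → F m + c * (1 - t) * ‖z - m‖ ^ 2 ≤ F z := by
    intro t ht ht1
    have ha : (0:ℝ) ≤ 1 - t := by linarith
    have hcomb := hcv.2 (Set.mem_univ m) (Set.mem_univ z) ha ht.le (by ring)
    have hnorm : ‖(1 - t) • m + t • z‖ ^ 2
        = (1 - t) * ‖m‖ ^ 2 + t * ‖z‖ ^ 2 - (1 - t) * t * ‖z - m‖ ^ 2 := by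
      have e1 : ∀ v : E, ‖v‖ ^ 2 = (inner ℝ v v : ℝ) := fun v =>
        (real_inner_self_eq_norm_sq v).symm
      rw [e1, e1, e1, e1]
      simp only [inner_add_left, inner_add_right, inner_sub_left, inner_sub_right,
        real_inner_smul_left, real_inner_smul_right]
      rw [real_inner_comm z m]
      ring
    have hmid := hm ((1 - t) • m + t • z)
    simp only [smul_eq_mul] at hcomb
    rw [hnorm] at hcomb
    have h2 : t * (F m + c * (1 - t) * ‖z - m‖ ^ 2) ≤ t * F z := by nlinarith [hmid, hcomb]
    exact le_of_mul_le_mul_left h2 ht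
  have hseq : Tendsto (fun k : ℕ => F m + c * (1 - 1 / (k + 1 : ℝ)) * ‖z - m‖ ^ 2) atTop
      (nhds (F m + c * ‖z - m‖ ^ 2)) := by
    have h0 : Tendsto (fun k : ℕ => 1 / (k + 1 : ℝ)) atTop (nhds 0) :=
      tendsto_one_div_add_atTop_nhds_zero_nat
    have h1 : Tendsto (fun k : ℕ => F m + c * (1 - 1 / (k + 1 : ℝ)) * ‖z - m‖ ^ 2) atTop
        (nhds (F m + c * (1 - 0) * ‖z - m‖ ^ 2)) :=
      tendsto_const_nhds.add (((tendsto_const_nhds.sub h0).const_mul c).mul_const _)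
    simpa using h1
  refine le_of_tendsto hseq (Filter.Eventually.of_forall fun k => key _ ?_ ?_)
  · positivity
  · rw [div_le_one (by positivity)]
    linarith [Nat.cast_nonneg (α := ℝ) k]

set_option maxHeartbeats 2000000 in
/-- Theorem 1: convergence of exact DM-ADMM — residual, primal variable,
and objective value all converge. -/
theorem dm_admm_convergence
    (n : ℕ) (f : Fin n → ℝ → ℝ) (C ρ ξ σ ystar : ℝ)
    (hσ : 0 < σ) (hρ : 0 < ρ) (hρξ : ρ ≤ (ξ - σ) / (2 * ((n : ℝ) - 1)))
    (hξ : 0 < ξ)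
    (hconv : ∀ i, ConvexOn ℝ Set.univ (f i))
    (hlsc : ∀ i, LowerSemicontinuous (f i))
    (hstrong : ConvexOn ℝ Set.univ
      (fun x : EuclideanSpace ℝ (Fin n) => (∑ i, f i (x i)) - ξ * ‖x‖ ^ 2))
    (xstar : EuclideanSpace ℝ (Fin n)) (hfeas : ∑ i, xstar i = C)
    (hmin : ∀ z : EuclideanSpace ℝ (Fin n), ∑ i, z i = C →
      ∑ i, f i (xstar i) ≤ ∑ i, f i (z i))
    (huniq : ∀ z : EuclideanSpace ℝ (Fin n), ∑ i, z i = C →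
      (∀ w : EuclideanSpace ℝ (Fin n), ∑ i, w i = C →
        ∑ i, f i (z i) ≤ ∑ i, f i (w i)) → z = xstar)
    (hsaddle : ∀ x : EuclideanSpace ℝ (Fin n),
      (∑ i, f i (xstar i)) + ystar * (∑ i, xstar i - C)
        ≤ (∑ i, f i (x i)) + ystar * (∑ i, x i - C))
    (x : ℕ → EuclideanSpace ℝ (Fin n)) (y : ℕ → ℝ) (r : ℕ → ℝ)
    (hr : ∀ k, r k = ∑ i, x k i - C)
    (hy : ∀ k, y (k + 1) = y k + ρ * r k)
    (hupd : ∀ k, ∀ i, ∀ z : ℝ,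
      f i (x (k + 1) i) + y (k + 1) * (x (k + 1) i + r k - x k i)
          + (ρ / 2) * (x (k + 1) i + r k - x k i) ^ 2
        ≤ f i z + y (k + 1) * (z + r k - x k i)
          + (ρ / 2) * (z + r k - x k i) ^ 2) :
    Filter.Tendsto r Filter.atTop (nhds 0) ∧
      Filter.Tendsto x Filter.atTop (nhds xstar) ∧
      Filter.Tendsto (fun k => ∑ i, f i (x k i)) Filter.atTop
        (nhds (∑ i, f i (xstar i))) := by
  by_cases hn0 : n = 0
  · subst hn0
    have hC : C = 0 := by simpa using hfeas.symm
    have hr0 : r = fun _ => (0:ℝ) := funext fun k => by rw [hr k]; simp [hC]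
    have hx0 : x = fun _ => xstar := funext fun k => by
      ext i
      exact i.elim0
    refine ⟨?_, ?_, ?_⟩
    · rw [hr0]; exact tendsto_const_nhds
    · rw [hx0]; exact tendsto_const_nhds
    · have he : (fun k => ∑ i, f i (x k i)) = fun _ => ∑ i, f i (xstar i) :=
        funext fun k => by rw [hx0]
      rw [he]; exact tendsto_const_nhds
  by_cases hn1 : n = 1
  · exfalso
    subst hn1
    norm_num at hρξ
    linarith
  have hn2 : 2 ≤ n := by omega
  set N : ℝ := (n : ℝ) with hNdef
  have hN : (2:ℝ) ≤ N := by rw [hNdef]; exact_mod_cast hn2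
  have hNpos : (0:ℝ) < N := by linarith
  have hξσ : 2 * ρ * (N - 1) ≤ ξ - σ := by
    have h := (le_div_iff₀ (by linarith : (0:ℝ) < 2 * (N - 1))).mp hρξ
    linarith
  set U : ℕ → ℝ := fun k => ∑ i, (x k i - xstar i) ^ 2 with hUdef
  have hU0 : ∀ k, 0 ≤ U k := fun k => Finset.sum_nonneg fun i _ => sq_nonneg _
  have hsx : ∀ k, ∑ i, x k i = r k + C := fun k => by rw [hr k]; ring
  have hUsum : ∀ k, ∑ i, (x k i - xstar i) = r k := fun k => by
    rw [Finset.sum_sub_distrib, hfeas, hsx k]; ring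
  have hnormU : ∀ k, ‖x k - xstar‖ ^ 2 = U k := by
    intro k
    rw [EuclideanSpace.norm_eq, Real.sq_sqrt (Finset.sum_nonneg fun i _ => sq_nonneg _)]
    exact Finset.sum_congr rfl fun i _ => by
      simp [PiLp.sub_apply, Real.norm_eq_abs, sq_abs]
  -- Lemma 1 (strong form)
  have hGconv : ConvexOn ℝ Set.univ
      (fun v : EuclideanSpace ℝ (Fin n) =>
        ((∑ i, f i (v i)) + ystar * (∑ i, v i - C)) - ξ * ‖v‖ ^ 2) := by
    have h := hstrong.add (conv_sum_aff n ystar (-(ystar * C)))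
    convert h using 1
    · rfl
    funext v
    simp only [Pi.add_apply]
    ring
  have hG := strong_min
    (fun v : EuclideanSpace ℝ (Fin n) => (∑ i, f i (v i)) + ystar * (∑ i, v i - C))
    ξ hξ.le hGconv xstar hsaddle
  have lemma1 : ∀ k, (∑ i, f i (xstar i)) + ξ * U (k + 1)
      ≤ (∑ i, f i (x (k + 1) i)) + ystar * r (k + 1) := by
    intro k
    have h := hG (x (k + 1))
    simp only at h
    rw [hnormU (k + 1)] at h
    rw [hfeas, hsx (k + 1)] at h
    simp only [sub_self, mul_zero, add_zero] at h
    have : r (k + 1) + C - C = r (k + 1) := by ring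
    rw [this] at h
    linarith
  -- Proposition 1 per agent
  have prop1 : ∀ k i,
      f i (x (k + 1) i) + y (k + 1) * (x (k + 1) i + r k - x k i)
          + (ρ / 2) * (x (k + 1) i + r k - x k i) ^ 2
          + (ρ / 2) * (xstar i - x (k + 1) i) ^ 2
        ≤ f i (xstar i) + y (k + 1) * (xstar i + r k - x k i)
          + (ρ / 2) * (xstar i + r k - x k i) ^ 2 := by
    intro k i
    have hFconv : ConvexOn ℝ Set.univ (fun z : ℝ =>
        (f i z + y (k + 1) * (z + r k - x k i) + (ρ / 2) * (z + r k - x k i) ^ 2)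
          - (ρ / 2) * ‖z‖ ^ 2) := by
      have h := (hconv i).add
        (conv_aff_real (y (k + 1) + ρ * (r k - x k i))
          (y (k + 1) * (r k - x k i) + (ρ / 2) * (r k - x k i) ^ 2))
      convert h using 1
      · rfl
      funext z
      simp only [Pi.add_apply, Real.norm_eq_abs, sq_abs]
      ring
    have h := strong_min
      (fun z : ℝ => f i z + y (k + 1) * (z + r k - x k i) + (ρ / 2) * (z + r k - x k i) ^ 2)
      (ρ / 2) (by linarith) hFconv (x (k + 1) i) (hupd k i) (xstar i)
    rw [Real.norm_eq_abs, sq_abs] at h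
    linarith
  -- helper sums
  have hs1 : ∀ k, ∑ i, (x (k + 1) i + r k - x k i) = r (k + 1) + (N - 1) * r k := by
    intro k
    simp only [Finset.sum_sub_distrib, Finset.sum_add_distrib, Finset.sum_const,
      Finset.card_univ, Fintype.card_fin, nsmul_eq_mul, hsx]
    ring
  have hs2 : ∀ k, ∑ i, (xstar i + r k - x k i) = (N - 1) * r k := by
    intro k
    simp only [Finset.sum_sub_distrib, Finset.sum_add_distrib, Finset.sum_const,
      Finset.card_univ, Fintype.card_fin, nsmul_eq_mul, hsx, hfeas]
    ring
  have hQ : ∀ k, ∑ i, (xstar i - x (k + 1) i) ^ 2 = U (k + 1) := fun k =>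
    Finset.sum_congr rfl fun i _ => by ring
  -- summed Proposition 1 combined with Lemma 1
  have F4 : ∀ k, (y (k + 1) - ystar) * r (k + 1)
      + (ρ / 2) * (∑ i, (x (k + 1) i + r k - x k i) ^ 2)
      + (ρ / 2 + ξ) * U (k + 1)
      ≤ (ρ / 2) * (∑ i, (xstar i + r k - x k i) ^ 2) := by
    intro k
    have hsum := Finset.sum_le_sum (s := Finset.univ) fun i _ => prop1 k i
    rw [Finset.sum_add_distrib, Finset.sum_add_distrib, Finset.sum_add_distrib,
      Finset.sum_add_distrib, Finset.sum_add_distrib,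
      ← Finset.mul_sum, ← Finset.mul_sum, ← Finset.mul_sum, ← Finset.mul_sum,
      ← Finset.mul_sum, hs1 k, hs2 k, hQ k] at hsum
    have hl := lemma1 k
    nlinarith [hsum, hl]
  -- key per-step Lyapunov inequality
  have key : ∀ k, N * (y (k + 2) - ystar) ^ 2 + ρ ^ 2 * N * (2 * N - 1) * U (k + 1)
      + 2 * ρ * σ * N * U (k + 1) + ρ ^ 2 * N * (r k) ^ 2
      ≤ N * (y (k + 1) - ystar) ^ 2 + ρ ^ 2 * N * (2 * N - 1) * U k := by
    intro k
    have hy2 : y (k + 2) = y (k + 1) + ρ * r (k + 1) := hy (k + 1)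
    have F4s := mul_le_mul_of_nonneg_left (F4 k) (show (0:ℝ) ≤ 2 * ρ * N by positivity)
    have hT : (∑ i, (xstar i + r k - x k i) ^ 2)
        = N * (r k) ^ 2 - 2 * (r k) ^ 2 + U k := by
      have e : ∀ i : Fin n, (xstar i + r k - x k i) ^ 2
          = (r k) ^ 2 - 2 * (r k) * (x k i - xstar i) + (x k i - xstar i) ^ 2 :=
        fun i => by ring
      rw [Finset.sum_congr rfl fun i _ => e i, Finset.sum_add_distrib,
        Finset.sum_sub_distrib, Finset.sum_const, Finset.card_univ, Fintype.card_fin,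
        ← Finset.mul_sum, hUsum k, nsmul_eq_mul]
      ring
    have hCS : (r (k + 1) + (N - 1) * r k) ^ 2
        ≤ N * ∑ i, (x (k + 1) i + r k - x k i) ^ 2 := by
      have h := sq_sum_le_card_mul_sum_sq (s := Finset.univ)
        (f := fun i : Fin n => x (k + 1) i + r k - x k i)
      rw [Finset.card_univ, Fintype.card_fin] at h
      rw [← hs1 k]
      exact_mod_cast h
    have hD : (r (k + 1) - r k) ^ 2 ≤ 2 * N * (U (k + 1) + U k) := by
      have hd1 : r (k + 1) - r k = ∑ i, (x (k + 1) i - x k i) := by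
        rw [Finset.sum_sub_distrib, hsx, hsx]; ring
      have hd2 := sq_sum_le_card_mul_sum_sq (s := Finset.univ)
        (f := fun i : Fin n => x (k + 1) i - x k i)
      rw [Finset.card_univ, Fintype.card_fin] at hd2
      have hd3 : ∑ i, (x (k + 1) i - x k i) ^ 2 ≤ 2 * U (k + 1) + 2 * U k := by
        have hp : ∀ i : Fin n, (x (k + 1) i - x k i) ^ 2
            ≤ 2 * (x (k + 1) i - xstar i) ^ 2 + 2 * (x k i - xstar i) ^ 2 := fun i => by
          nlinarith [sq_nonneg (x (k + 1) i + x k i - 2 * xstar i)]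
        calc ∑ i, (x (k + 1) i - x k i) ^ 2
            ≤ ∑ i, (2 * (x (k + 1) i - xstar i) ^ 2 + 2 * (x k i - xstar i) ^ 2) :=
              Finset.sum_le_sum fun i _ => hp i
          _ = 2 * U (k + 1) + 2 * U k := by
              rw [Finset.sum_add_distrib, ← Finset.mul_sum, ← Finset.mul_sum]
      have hd4 : (N:ℝ) * ∑ i, (x (k + 1) i - x k i) ^ 2 ≤ N * (2 * U (k + 1) + 2 * U k) :=
        mul_le_mul_of_nonneg_left hd3 hNpos.le
      rw [hd1]
      calc (∑ i, (x (k + 1) i - x k i)) ^ 2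
          ≤ N * ∑ i, (x (k + 1) i - x k i) ^ 2 := by exact_mod_cast hd2
        _ ≤ 2 * N * (U (k + 1) + U k) := by linarith
    have hCSs := mul_le_mul_of_nonneg_left hCS (sq_nonneg ρ)
    have hDs := mul_le_mul_of_nonneg_left hD
      (show (0:ℝ) ≤ ρ ^ 2 * (N - 1) from mul_nonneg (sq_nonneg ρ) (by linarith))
    have hprod : 0 ≤ (2 * ξ - 2 * σ - 4 * ρ * (N - 1)) * (ρ * N * U (k + 1)) :=
      mul_nonneg (by linarith)
        (mul_nonneg (mul_nonneg hρ.le hNpos.le) (hU0 (k + 1)))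
    have hTs : ρ ^ 2 * N * (∑ i, (xstar i + r k - x k i) ^ 2)
        = ρ ^ 2 * N * (N * (r k) ^ 2 - 2 * (r k) ^ 2 + U k) := by rw [hT]
    have hI : ρ ^ 2 * N * (r (k + 1)) ^ 2 - ρ ^ 2 * (r (k + 1) + (N - 1) * r k) ^ 2
        = ρ ^ 2 * (N - 1) * (r (k + 1) - r k) ^ 2 - ρ ^ 2 * N * (N - 1) * (r k) ^ 2 := by
      ring
    rw [hy2]
    linarith [F4s, hCSs, hDs, hprod, hTs, hI]
  -- Lyapunov function
  set W : ℕ → ℝ := fun k => N * (y (k + 1) - ystar) ^ 2 + ρ ^ 2 * N * (2 * N - 1) * U k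
    with hWdef
  have hW0 : ∀ k, 0 ≤ W k := by
    intro k
    have h1 : 0 ≤ N * (y (k + 1) - ystar) ^ 2 := mul_nonneg hNpos.le (sq_nonneg _)
    have h2 : 0 ≤ ρ ^ 2 * N * (2 * N - 1) * U k :=
      mul_nonneg (mul_nonneg (mul_nonneg (sq_nonneg ρ) hNpos.le) (by linarith)) (hU0 k)
    simp only [hWdef]
    linarith
  set g : ℕ → ℝ := fun k => 2 * ρ * σ * N * U (k + 1) + ρ ^ 2 * N * (r k) ^ 2 with hgdef
  have hg0 : ∀ k, 0 ≤ g k := by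
    intro k
    have h1 : 0 ≤ 2 * ρ * σ * N * U (k + 1) := by
      have := hU0 (k + 1); positivity
    have h2 : 0 ≤ ρ ^ 2 * N * (r k) ^ 2 := by positivity
    simp only [hgdef]
    linarith
  have hWkey : ∀ k, W (k + 1) + g k ≤ W k := by
    intro k
    have := key k
    simp only [hWdef, hgdef]
    linarith
  have hpartial : ∀ K, (∑ k ∈ Finset.range K, g k) + W K ≤ W 0 := by
    intro K
    induction K with
    | zero => simp
    | succ K ih =>
        rw [Finset.sum_range_succ]
        have := hWkey K
        linarith
  have hsummable : Summable g :=
    summable_of_sum_range_le (c := W 0) hg0 fun K => by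
      have := hpartial K
      have := hW0 K
      linarith
  have hgto : Tendsto g atTop (nhds 0) := hsummable.tendsto_atTop_zero
  -- U (k+1) → 0
  have hcU : (0:ℝ) < 2 * ρ * σ * N := by positivity
  have hU1to : Tendsto (fun k => U (k + 1)) atTop (nhds 0) := by
    have h1 : Tendsto (fun k => 2 * ρ * σ * N * U (k + 1)) atTop (nhds 0) := by
      refine squeeze_zero (fun k => ?_) (fun k => ?_) hgto
      · have := hU0 (k + 1); positivity
      · have h2 : 0 ≤ ρ ^ 2 * N * (r k) ^ 2 := by positivity
        simp only [hgdef]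
        linarith
    have h2 := h1.const_mul (2 * ρ * σ * N)⁻¹
    have h3 : (fun k => (2 * ρ * σ * N)⁻¹ * (2 * ρ * σ * N * U (k + 1)))
        = fun k => U (k + 1) := funext fun k => by
      field_simp
    rw [h3] at h2
    simpa using h2
  have hUto : Tendsto U atTop (nhds 0) :=
    (tendsto_add_atTop_iff_nat (f := fun k => U k) (l := nhds 0) 1).mp hU1to
  -- r² → 0
  have hcr : (0:ℝ) < ρ ^ 2 * N := by positivity
  have hr2to : Tendsto (fun k => (r k) ^ 2) atTop (nhds 0) := by
    have h1 : Tendsto (fun k => ρ ^ 2 * N * (r k) ^ 2) atTop (nhds 0) := by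
      refine squeeze_zero (fun k => by positivity) (fun k => ?_) hgto
      have h2 : 0 ≤ 2 * ρ * σ * N * U (k + 1) := by
        have := hU0 (k + 1); positivity
      simp only [hgdef]
      linarith
    have h2 := h1.const_mul (ρ ^ 2 * N)⁻¹
    have h3 : (fun k => (ρ ^ 2 * N)⁻¹ * (ρ ^ 2 * N * (r k) ^ 2))
        = fun k => (r k) ^ 2 := funext fun k => by field_simp
    rw [h3] at h2
    simpa using h2
  -- r → 0
  have hrto : Tendsto r atTop (nhds 0) := by
    have habs : Tendsto (fun k => |r k|) atTop (nhds 0) := by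
      have h := (Real.continuous_sqrt.tendsto 0).comp hr2to
      simpa [Function.comp_def, Real.sqrt_sq_eq_abs] using h
    exact tendsto_of_tendsto_of_tendsto_of_le_of_le (by simpa using habs.neg) habs
      (fun k => neg_abs_le _) (fun k => le_abs_self _)
  -- x → xstar
  have hxto : Tendsto x atTop (nhds xstar) := by
    rw [tendsto_iff_norm_sub_tendsto_zero]
    have h3 : (fun k => ‖x k - xstar‖) = fun k => Real.sqrt (U k) :=
      funext fun k => by rw [← hnormU k, Real.sqrt_sq (norm_nonneg _)]
    rw [h3]
    have h := (Real.continuous_sqrt.tendsto 0).comp hUto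
    simpa [Function.comp_def] using h
  -- coordinates converge
  have hxi : ∀ i : Fin n, Tendsto (fun k => x k i) atTop (nhds (xstar i)) := by
    intro i
    have hsq : ∀ k, (x k i - xstar i) ^ 2 ≤ U k := fun k =>
      Finset.single_le_sum (f := fun j => (x k j - xstar j) ^ 2)
        (fun j _ => sq_nonneg _) (Finset.mem_univ i)
    have h1 : Tendsto (fun k => (x k i - xstar i) ^ 2) atTop (nhds 0) :=
      squeeze_zero (fun k => sq_nonneg _) hsq hUto
    have habs : Tendsto (fun k => |x k i - xstar i|) atTop (nhds 0) := by
      have h := (Real.continuous_sqrt.tendsto 0).comp h1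
      simpa [Function.comp_def, Real.sqrt_sq_eq_abs] using h
    have h2 : Tendsto (fun k => x k i - xstar i) atTop (nhds 0) :=
      tendsto_of_tendsto_of_tendsto_of_le_of_le (by simpa using habs.neg) habs
        (fun k => neg_abs_le _) (fun k => le_abs_self _)
    have h3 := h2.add (tendsto_const_nhds (x := xstar i) (f := atTop))
    simpa using h3
  -- objective converges
  have hcont : ∀ i : Fin n, Continuous (f i) := fun i =>
    continuousOn_univ.mp ((hconv i).continuousOn isOpen_univ)
  refine ⟨hrto, hxto, ?_⟩
  exact tendsto_finset_sum _ fun i _ => ((hcont i).tendsto (xstar i)).comp (hxi i)
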